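/- arXiv:0807.0155 — 3 statements merged into one kernel-verified Lean document; each statement's English description precedes it below -/
import Mathlib

section
/- Let α be a nonzero real number and let A_α be the 2×2 complex matrix [[1, α], [0, 1]]. Consider the quadruple of subspaces of V = ℂ² ⊕ ℂ² given by V₁ = ℂ² ⊕ 0, V₂ = 0 ⊕ ℂ², V₃ = {(x, x) : x ∈ ℂ²}, V₄ = {(x, A_α x) : x ∈ ℂ²}. Then this representation of the poset (1,1,1,1) (four pairwise incomparable elements) is indecomposable, but it is not a brick: there exists an endomorphism C : V → V with C(V_i) ⊆ V_i for i = 1,2,3,4 that is not a scalar multiple of the identity. -/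
noncomputable section

/-- A system of subspaces `A : ι → Submodule ℂ V` is decomposable if the ambient space
splits as a direct sum of two nonzero subspaces compatible with every member of the system
(this is the internal reformulation of being isomorphic to a direct sum of two
representations with nonzero ambient spaces). -/
def IsDecomposableSystem {ι V : Type*} [AddCommGroup V] [Module ℂ V]
    (A : ι → Submodule ℂ V) : Prop :=
  ∃ U W : Submodule ℂ V, IsCompl U W ∧ U ≠ ⊥ ∧ W ≠ ⊥ ∧
    ∀ i, A i = A i ⊓ U ⊔ A i ⊓ W

/-- A system of subspaces is indecomposable if the ambient space is nonzero and the system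
is not decomposable. -/
def IsIndecomposableSystem {ι V : Type*} [AddCommGroup V] [Module ℂ V]
    (A : ι → Submodule ℂ V) : Prop :=
  (∃ v : V, v ≠ 0) ∧ ¬ IsDecomposableSystem A

/-- The matrix `A_α = [[1, α], [0, 1]]`. -/
def Amat (α : ℝ) : Matrix (Fin 2) (Fin 2) ℂ := !![1, (α : ℂ); 0, 1]

/-- The quadruple of subspaces of `V = ℂ² ⊕ ℂ²`:
`V₁ = ℂ² ⊕ 0`, `V₂ = 0 ⊕ ℂ²`, `V₃ = {(x, x)}`, `V₄ = {(x, A_α x)}`. -/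
def rep0 (α : ℝ) : Fin 4 → Submodule ℂ ((Fin 2 → ℂ) × (Fin 2 → ℂ)) :=
  ![Submodule.prod ⊤ ⊥,
    Submodule.prod ⊥ ⊤,
    LinearMap.graph (LinearMap.id : (Fin 2 → ℂ) →ₗ[ℂ] (Fin 2 → ℂ)),
    LinearMap.graph (Matrix.toLin' (Amat α))]

lemma endo_structure (α : ℝ)
    (C : ((Fin 2 → ℂ) × (Fin 2 → ℂ)) →ₗ[ℂ] ((Fin 2 → ℂ) × (Fin 2 → ℂ)))
    (hC : ∀ i, ∀ v ∈ rep0 α i, C v ∈ rep0 α i) :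
    ∃ B : (Fin 2 → ℂ) →ₗ[ℂ] (Fin 2 → ℂ),
      (∀ x y, C (x, y) = (B x, B y)) ∧
      (∀ x, B (Matrix.toLin' (Amat α) x) = Matrix.toLin' (Amat α) (B x)) := by
  set A' := Matrix.toLin' (Amat α) with hA'
  have h0 : ∀ x : Fin 2 → ℂ, (C (x, 0)).2 = 0 := by
    intro x
    have := hC 0 (x, 0) (by simp [rep0])
    simpa [rep0, Submodule.mem_prod] using this
  have h1 : ∀ y : Fin 2 → ℂ, (C (0, y)).1 = 0 := by
    intro y
    have := hC 1 (0, y) (by simp [rep0])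
    simpa [rep0, Submodule.mem_prod] using this
  set B := (LinearMap.fst ℂ _ _) ∘ₗ C ∘ₗ (LinearMap.inl ℂ (Fin 2 → ℂ) (Fin 2 → ℂ)) with hB
  have hBx : ∀ x : Fin 2 → ℂ, B x = (C (x, 0)).1 := fun x => rfl
  have h2 : ∀ y : Fin 2 → ℂ, (C (0, y)).2 = B y := by
    intro y
    have hy : ((y, y) : (Fin 2 → ℂ) × (Fin 2 → ℂ)) ∈ rep0 α 2 := by
      simp [rep0, LinearMap.mem_graph_iff]
    have := hC 2 _ hy
    simp only [rep0] at this
    rw [show ((2 : Fin 4) : Fin 4) = 2 from rfl] at this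
    have hmem : (C (y, y)).2 = (C (y, y)).1 := by
      simpa [rep0, LinearMap.mem_graph_iff] using this
    have hsplit : C (y, y) = C (y, 0) + C (0, y) := by
      rw [← map_add]; norm_num
    rw [hsplit] at hmem
    simp only [Prod.fst_add, Prod.snd_add, h0, h1, zero_add, add_zero] at hmem
    rw [hBx, hmem]
  have key : ∀ x y, C (x, y) = (B x, B y) := by
    intro x y
    have hsplit : C (x, y) = C (x, 0) + C (0, y) := by
      rw [← map_add]; norm_num
    ext
    · simp [hsplit, h1, hBx]
    · simp [hsplit, h0, h2]
  refine ⟨B, key, ?_⟩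
  intro x
  have hx : ((x, A' x) : (Fin 2 → ℂ) × (Fin 2 → ℂ)) ∈ rep0 α 3 := by
    simp [rep0, LinearMap.mem_graph_iff, hA', Matrix.toLin'_apply]
  have := hC 3 _ hx
  have hmem : (C (x, A' x)).2 = A' (C (x, A' x)).1 := by
    exact (LinearMap.mem_graph_iff _ _).mp this
  rw [key] at hmem
  simpa using hmem

-- commutant & idempotent lemma
lemma comm_idem (α : ℝ) (hα : α ≠ 0) (B : (Fin 2 → ℂ) →ₗ[ℂ] (Fin 2 → ℂ))
    (hcomm : ∀ x, B (Matrix.toLin' (Amat α) x) = Matrix.toLin' (Amat α) (B x))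
    (hidem : ∀ x, B (B x) = B x) :
    (∀ x, B x = 0) ∨ (∀ x, B x = x) := by
  set M := LinearMap.toMatrix' B with hM
  have hBM : B = Matrix.toLin' M := by rw [hM]; simp
  have hαC : (α : ℂ) ≠ 0 := by exact_mod_cast hα
  have hMA : M * Amat α = Amat α * M := by
    apply Matrix.toLin'.injective
    rw [Matrix.toLin'_mul, Matrix.toLin'_mul, ← hBM]
    exact LinearMap.ext fun x => by simpa using hcomm x
  have hMM : M * M = M := by
    apply Matrix.toLin'.injective
    rw [Matrix.toLin'_mul, ← hBM]
    exact LinearMap.ext fun x => by simpa using hidem x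
  have e00 := congrFun (congrFun hMA 0) 0
  have e01 := congrFun (congrFun hMA 0) 1
  simp [Amat, Matrix.mul_apply, Fin.sum_univ_two] at e00 e01
  have hc : M 1 0 = 0 := e00.resolve_left hα
  have had : M 1 1 = M 0 0 :=
    mul_left_cancel₀ hαC (show (α:ℂ) * M 1 1 = (α:ℂ) * M 0 0 by linear_combination -e01)
  have m00 := congrFun (congrFun hMM 0) 0
  have m01 := congrFun (congrFun hMM 0) 1
  simp [Matrix.mul_apply, Fin.sum_univ_two, hc, had] at m00 m01
  have ha : M 0 0 = 0 ∨ M 0 0 = 1 := by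
    rcases mul_eq_zero.mp (show M 0 0 * (M 0 0 - 1) = 0 by linear_combination m00) with h | h
    · exact Or.inl h
    · exact Or.inr (sub_eq_zero.mp h)
  rcases ha with h | h
  · left
    have hb : M 0 1 = 0 := by
      have : M 0 0 * M 0 1 + M 0 1 * M 0 0 = M 0 1 := m01
      rw [h] at this; linear_combination -this
    have hM0 : M = 0 := by
      ext i j
      fin_cases i <;> fin_cases j <;> simp [h, hb, hc, had]
    intro x; rw [hBM, hM0]; simp
  · right
    have hb : M 0 1 = 0 := by
      have : M 0 0 * M 0 1 + M 0 1 * M 0 0 = M 0 1 := m01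
      rw [h] at this; linear_combination this
    have hM1 : M = 1 := by
      ext i j
      fin_cases i <;> fin_cases j <;> simp [h, hb, hc, had, Matrix.one_apply]
    intro x; rw [hBM, hM1]; simp

lemma Ncomm (α : ℝ) :
    (!![0,1;0,0] : Matrix (Fin 2) (Fin 2) ℂ) * Amat α = Amat α * !![0,1;0,0] := by
  ext i j
  fin_cases i <;> fin_cases j <;> simp [Amat, Matrix.mul_apply, Fin.sum_univ_two]

/-- The representation `(V; V₁, V₂, V₃, V₄)` of the poset `(1,1,1,1)` is indecomposable but
is not a brick: it admits an endomorphism which is not a scalar multiple of the identity. -/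
theorem rep0_indecomposable_not_brick (α : ℝ) (hα : α ≠ 0) :
    IsIndecomposableSystem (rep0 α) ∧
    ∃ C : ((Fin 2 → ℂ) × (Fin 2 → ℂ)) →ₗ[ℂ] ((Fin 2 → ℂ) × (Fin 2 → ℂ)),
      (∀ i, (rep0 α i).map C ≤ rep0 α i) ∧
      ∀ c : ℂ, C ≠ c • (LinearMap.id : ((Fin 2 → ℂ) × (Fin 2 → ℂ)) →ₗ[ℂ] _) := by
  set A' := Matrix.toLin' (Amat α) with hA'
  constructor
  · constructor
    · exact ⟨(Pi.single 0 1, 0), fun h => by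
        simpa using congrFun (congrArg Prod.fst h) 0⟩
    · rintro ⟨U, W, hUW, hU, hW, hsum⟩
      set P := U.subtype ∘ₗ U.linearProjOfIsCompl W hUW with hP
      have hPU : ∀ u ∈ U, P u = u := fun u hu => by
        exact congrArg Subtype.val
          (Submodule.linearProjOfIsCompl_apply_left hUW ⟨u, hu⟩)
      have hPW : ∀ w ∈ W, P w = 0 := fun w hw => by
        exact congrArg Subtype.val
          (Submodule.linearProjOfIsCompl_apply_right hUW ⟨w, hw⟩)
      have hPmem : ∀ v, P v ∈ U := fun v => (U.linearProjOfIsCompl W hUW v).2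
      have hPrep : ∀ i, ∀ v ∈ rep0 α i, P v ∈ rep0 α i := by
        intro i v hv
        rw [hsum i] at hv
        obtain ⟨u, hu, w, hw, rfl⟩ := Submodule.mem_sup.mp hv
        have : P (u + w) = u := by
          rw [map_add, hPU u hu.2, hPW w hw.2, add_zero]
        rw [this]; exact hu.1
      obtain ⟨B, hB, hcomm⟩ := endo_structure α P hPrep
      have hPP : ∀ v, P (P v) = P v := fun v => hPU _ (hPmem v)
      have hBB : ∀ x, B (B x) = B x := by
        intro x
        have h1 : P (x, 0) = (B x, B 0) := hB x 0
        have h2 := hPP (x, 0)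
        rw [h1, hB (B x) (B 0)] at h2
        exact congrArg Prod.fst h2
      rcases comm_idem α hα B hcomm hBB with hz | hid
      · apply hU
        rw [Submodule.eq_bot_iff]
        intro u hu
        have : P u = u := hPU u hu
        rw [show u = (u.1, u.2) from rfl, hB u.1 u.2, hz u.1, hz u.2] at this
        exact this.symm
      · apply hW
        rw [Submodule.eq_bot_iff]
        intro w hw
        have : P w = 0 := hPW w hw
        rw [show w = (w.1, w.2) from rfl, hB w.1 w.2, hid w.1, hid w.2] at this
        exact this
  · set B0 : (Fin 2 → ℂ) →ₗ[ℂ] (Fin 2 → ℂ) :=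
      Matrix.toLin' (!![0,1;0,0] : Matrix (Fin 2) (Fin 2) ℂ) with hB0
    have hcomm : ∀ x, B0 (A' x) = A' (B0 x) := by
      intro x
      have h1 : B0 ∘ₗ A' = Matrix.toLin' ((!![0,1;0,0] : Matrix (Fin 2) (Fin 2) ℂ) * Amat α) :=
        (Matrix.toLin'_mul _ _).symm
      have h2 : A' ∘ₗ B0 = Matrix.toLin' (Amat α * (!![0,1;0,0] : Matrix (Fin 2) (Fin 2) ℂ)) :=
        (Matrix.toLin'_mul _ _).symm
      have := congrArg Matrix.toLin' (Ncomm α)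
      rw [← h1, ← h2] at this
      exact LinearMap.ext_iff.mp this x
    refine ⟨LinearMap.prodMap B0 B0, ?_, ?_⟩
    · intro i
      rintro _ ⟨v, hv, rfl⟩
      have hCv : (LinearMap.prodMap B0 B0) v = (B0 v.1, B0 v.2) := rfl
      fin_cases i
      · have hv0 : v ∈ Submodule.prod (⊤ : Submodule ℂ (Fin 2 → ℂ)) ⊥ := by
          exact hv
        have h2 : v.2 = 0 := (Submodule.mem_bot ℂ).mp hv0.2
        simp only [rep0, Matrix.cons_val_zero]
        rw [hCv]
        exact Submodule.mem_prod.mpr ⟨trivial, by simp [h2]⟩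
      · have hv0 : v ∈ Submodule.prod (⊥ : Submodule ℂ (Fin 2 → ℂ)) ⊤ := by
          exact hv
        have h2 : v.1 = 0 := (Submodule.mem_bot ℂ).mp hv0.1
        simp only [rep0, Matrix.cons_val_one, Matrix.head_cons]
        rw [hCv]
        exact Submodule.mem_prod.mpr ⟨by simp [h2], trivial⟩
      · have h : v.2 = v.1 := by simpa [rep0, LinearMap.mem_graph_iff] using hv
        simp only [rep0]
        rw [hCv]
        exact (LinearMap.mem_graph_iff _ _).mpr (by simp [h])
      · have h : v.2 = A' v.1 := by
          simpa [rep0, LinearMap.mem_graph_iff, hA', Matrix.toLin'_apply] using hv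
        simp only [rep0]
        rw [hCv]
        refine (LinearMap.mem_graph_iff _ _).mpr ?_
        show B0 v.2 = A' (B0 v.1)
        rw [h, hcomm]
    · intro c h
      have h1 := LinearMap.ext_iff.mp h ((Pi.single 1 1 : Fin 2 → ℂ), 0)
      have h2 := congrFun (congrArg Prod.fst h1) 0
      simp [hB0, Matrix.toLin'_apply, Matrix.mulVec, dotProduct,
        Fin.sum_univ_two, Pi.single] at h2
end
end

section
/- For λ ∈ ℂ \ {0, 1}, let π_λ be the representation of the poset (1,1,1,1) in V = ℂ² with basis e₁, e₂ given by the four lines V₁ = span{e₁}, V₂ = span{e₂}, V₃ = span{e₁ + e₂}, V₄ = span{e₁ + λ e₂}. Then each π_λ is indecomposable, and for λ ≠ μ (both in ℂ \ {0,1}) the representations π_λ and π_μ are not isomorphic; in particular the poset (1,1,1,1) has infinitely many pairwise non-isomorphic indecomposable representations. -/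
noncomputable section

/-- Two systems of subspaces are isomorphic if there is an invertible linear map carrying
each member of the first system onto the corresponding member of the second. -/
def RepIso {ι V W : Type*} [AddCommGroup V] [Module ℂ V] [AddCommGroup W] [Module ℂ W]
    (A : ι → Submodule ℂ V) (B : ι → Submodule ℂ W) : Prop :=
  ∃ C : V ≃ₗ[ℂ] W, ∀ i, (A i).map (C : V →ₗ[ℂ] W) = B i

/-- The representation `π_λ` of the poset `(1,1,1,1)` in `ℂ²`:
`V₁ = span{e₁}`, `V₂ = span{e₂}`, `V₃ = span{e₁+e₂}`, `V₄ = span{e₁+λe₂}`. -/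
def piRep (lam : ℂ) : Fin 4 → Submodule ℂ (Fin 2 → ℂ) :=
  ![Submodule.span ℂ {![1, 0]},
    Submodule.span ℂ {![0, 1]},
    Submodule.span ℂ {![1, 1]},
    Submodule.span ℂ {![1, lam]}]

namespace FourAux

abbrev V2 : Type := Fin 2 → ℂ

lemma e1_ne : (![1,0] : V2) ≠ 0 := by
  intro h; have := congrFun h 0; simp at this

lemma e2_ne : (![0,1] : V2) ≠ 0 := by
  intro h; have := congrFun h 1; simp at this

lemma e3_ne : (![1,1] : V2) ≠ 0 := by
  intro h; have := congrFun h 0; simp at this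

lemma span_piece {v : V2} {U W : Submodule ℂ V2}
    (h : Submodule.span ℂ {v} = Submodule.span ℂ {v} ⊓ U ⊔ Submodule.span ℂ {v} ⊓ W) :
    v ∈ U ∨ v ∈ W := by
  have hv' : v ∈ Submodule.span ℂ {v} ⊓ U ⊔ Submodule.span ℂ {v} ⊓ W := by
    rw [← h]; exact Submodule.mem_span_singleton_self v
  obtain ⟨u, hu, w, hw, huw⟩ := Submodule.mem_sup.mp hv'
  obtain ⟨a, ha⟩ := Submodule.mem_span_singleton.mp hu.1
  obtain ⟨b, hb⟩ := Submodule.mem_span_singleton.mp hw.1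
  by_cases ha0 : a = 0
  · right
    have hvw : v = w := by
      rw [← ha, ha0, zero_smul, zero_add] at huw
      exact huw.symm
    exact hvw ▸ hw.2
  · left
    have : v = a⁻¹ • u := by rw [← ha, smul_smul, inv_mul_cancel₀ ha0, one_smul]
    rw [this]; exact Submodule.smul_mem _ _ hu.2

lemma top_of {U : Submodule ℂ V2} (h1 : (![1,0] : V2) ∈ U) (h2 : (![0,1] : V2) ∈ U) :
    U = ⊤ := by
  rw [eq_top_iff]
  intro x _
  have hx : x = x 0 • ![1,0] + x 1 • ![0,1] := by
    funext i; fin_cases i <;> simp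
  rw [hx]
  exact Submodule.add_mem _ (Submodule.smul_mem _ _ h1) (Submodule.smul_mem _ _ h2)

lemma sub31 : (![0,1] : V2) = ![1,1] - ![1,0] := by funext i; fin_cases i <;> simp
lemma sub32 : (![1,0] : V2) = ![1,1] - ![0,1] := by funext i; fin_cases i <;> simp

lemma indec (lam : ℂ) : IsIndecomposableSystem (piRep lam) := by
  refine ⟨⟨![1,0], e1_ne⟩, ?_⟩
  rintro ⟨U, W, hc, hU, hW, hA⟩
  have h0 : Submodule.span ℂ {(![1,0] : V2)} =
      Submodule.span ℂ {(![1,0] : V2)} ⊓ U ⊔ Submodule.span ℂ {(![1,0] : V2)} ⊓ W := hA 0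
  have h1 : Submodule.span ℂ {(![0,1] : V2)} =
      Submodule.span ℂ {(![0,1] : V2)} ⊓ U ⊔ Submodule.span ℂ {(![0,1] : V2)} ⊓ W := hA 1
  have h2 : Submodule.span ℂ {(![1,1] : V2)} =
      Submodule.span ℂ {(![1,1] : V2)} ⊓ U ⊔ Submodule.span ℂ {(![1,1] : V2)} ⊓ W := hA 2
  have m0 := span_piece h0
  have m1 := span_piece h1
  have m2 := span_piece h2
  have key : U = ⊤ ∨ W = ⊤ := by
    rcases m0 with u0 | w0 <;> rcases m1 with u1 | w1
    · exact Or.inl (top_of u0 u1)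
    · rcases m2 with u2 | w2
      · exact Or.inl (top_of u0 (sub31 ▸ Submodule.sub_mem _ u2 u0))
      · exact Or.inr (top_of (sub32 ▸ Submodule.sub_mem _ w2 w1) w1)
    · rcases m2 with u2 | w2
      · exact Or.inl (top_of (sub32 ▸ Submodule.sub_mem _ u2 u1) u1)
      · exact Or.inr (top_of w0 (sub31 ▸ Submodule.sub_mem _ w2 w0))
    · exact Or.inr (top_of w0 w1)
  rcases key with hT | hT
  · exact hW (by rw [← hc.disjoint.eq_bot, hT, top_inf_eq])
  · exact hU (by rw [← hc.disjoint.eq_bot, hT, inf_top_eq])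

lemma noniso {lam mu : ℂ} (hlm : lam ≠ mu) : ¬ RepIso (piRep lam) (piRep mu) := by
  rintro ⟨C, hC⟩
  have h0 : (Submodule.span ℂ {(![1,0] : V2)}).map (C : V2 →ₗ[ℂ] V2) =
      Submodule.span ℂ {(![1,0] : V2)} := hC 0
  have h1 : (Submodule.span ℂ {(![0,1] : V2)}).map (C : V2 →ₗ[ℂ] V2) =
      Submodule.span ℂ {(![0,1] : V2)} := hC 1
  have h2 : (Submodule.span ℂ {(![1,1] : V2)}).map (C : V2 →ₗ[ℂ] V2) =
      Submodule.span ℂ {(![1,1] : V2)} := hC 2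
  have h3 : (Submodule.span ℂ {(![1,lam] : V2)}).map (C : V2 →ₗ[ℂ] V2) =
      Submodule.span ℂ {(![1,mu] : V2)} := hC 3
  have mem : ∀ (v w : V2), (Submodule.span ℂ {v}).map (C : V2 →ₗ[ℂ] V2) =
      Submodule.span ℂ {w} → ∃ a : ℂ, a • w = C v := by
    intro v w hvw
    have : (C : V2 →ₗ[ℂ] V2) v ∈ Submodule.span ℂ {w} := by
      rw [← hvw]
      exact Submodule.mem_map_of_mem (Submodule.mem_span_singleton_self _)
    exact Submodule.mem_span_singleton.mp this
  obtain ⟨a, ha⟩ := mem _ _ h0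
  obtain ⟨b, hb⟩ := mem _ _ h1
  obtain ⟨c, hcc⟩ := mem _ _ h2
  obtain ⟨d, hd⟩ := mem _ _ h3
  have dec1 : (![1,1] : V2) = ![1,0] + ![0,1] := by funext i; fin_cases i <;> simp
  have dec2 : (![1,lam] : V2) = ![1,0] + lam • ![0,1] := by funext i; fin_cases i <;> simp
  have eq1 : a • (![1,0] : V2) + b • ![0,1] = c • ![1,1] := by
    rw [ha, hb, hcc, dec1, map_add]
  have eq2 : a • (![1,0] : V2) + (lam * b) • ![0,1] = d • ![1,mu] := by
    rw [mul_smul, ha, hb, hd, dec2, map_add, map_smul]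
  have c00 : a = c := by
    have := congrFun eq1 0
    simpa using this
  have c01 : b = c := by
    have := congrFun eq1 1
    simpa using this
  have c10 : a = d := by
    have := congrFun eq2 0
    simpa using this
  have c11 : lam * b = d * mu := by
    have := congrFun eq2 1
    simpa using this
  have hane : a ≠ 0 := by
    intro h
    apply e1_ne
    have : C ![1,0] = 0 := by rw [← ha, h, zero_smul]
    exact C.map_eq_zero_iff.mp this
  apply hlm
  have hab : b = a := c01.trans c00.symm
  rw [hab, ← c10] at c11
  exact mul_left_cancel₀ hane (by linear_combination c11)

end FourAux

/-- Each `π_λ` (λ ≠ 0, 1) is indecomposable, `π_λ ≇ π_μ` for `λ ≠ μ`, and in particular the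
poset `(1,1,1,1)` has infinitely many pairwise non-isomorphic indecomposable
representations. -/
theorem fourSubspaces_infinite_family :
    (∀ lam : ℂ, lam ≠ 0 → lam ≠ 1 → IsIndecomposableSystem (piRep lam)) ∧
    (∀ lam mu : ℂ, lam ≠ 0 → lam ≠ 1 → mu ≠ 0 → mu ≠ 1 → lam ≠ mu →
      ¬ RepIso (piRep lam) (piRep mu)) ∧
    (∃ f : ℕ → (Fin 4 → Submodule ℂ (Fin 2 → ℂ)),
      (∀ n, IsIndecomposableSystem (f n)) ∧
      ∀ n m, n ≠ m → ¬ RepIso (f n) (f m)) := by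
  refine ⟨fun lam _ _ => FourAux.indec lam,
    fun lam mu _ _ _ _ h => FourAux.noniso h,
    ⟨fun n => piRep ((n : ℂ) + 2), fun n => FourAux.indec _, fun n m hnm => ?_⟩⟩
  apply FourAux.noniso
  intro h
  apply hnm
  have : (n : ℂ) = m := by linear_combination h
  exact_mod_cast this
end
end

section
/- Let α, β, δ, γ be positive real numbers. There exist rank-one orthogonal projections P, Q, R on ℂ² (with its standard inner product) such that the family {P, Q, R} is irreducible and α·P + β·Q + δ·R = γ·I, if and only if α < γ, β < γ, δ < γ, and α + β + δ = 2γ. (This describes all weights with which the unique indecomposable representation of the poset (1,1,1) with dimension vector (1;1;1;2) can be unitarized.) -/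
noncomputable section

/-- An orthogonal projection on `ℂⁿ` (with its standard inner product): a symmetric
idempotent linear operator. -/
def IsOrthProj {n : ℕ}
    (p : EuclideanSpace ℂ (Fin n) →ₗ[ℂ] EuclideanSpace ℂ (Fin n)) : Prop :=
  p.IsSymmetric ∧ p ∘ₗ p = p

/-- For orthogonal projections, `p ≤ q` means `pq = qp = p`. -/
def ProjLE {n : ℕ}
    (p q : EuclideanSpace ℂ (Fin n) →ₗ[ℂ] EuclideanSpace ℂ (Fin n)) : Prop :=
  q ∘ₗ p = p ∧ p ∘ₗ q = p

/-- A family of operators on `ℂⁿ` is irreducible if the only subspaces invariant under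
every member of the family are `{0}` and `ℂⁿ`. -/
def IrreducibleFamily {n : ℕ}
    (T : Set (EuclideanSpace ℂ (Fin n) →ₗ[ℂ] EuclideanSpace ℂ (Fin n))) : Prop :=
  ∀ W : Submodule ℂ (EuclideanSpace ℂ (Fin n)),
    (∀ f ∈ T, W.map f ≤ W) → W = ⊥ ∨ W = ⊤

abbrev E2 := EuclideanSpace ℂ (Fin 2)

noncomputable def pr (u : E2) : E2 →ₗ[ℂ] E2 where
  toFun x := (inner ℂ u x : ℂ) • u
  map_add' x y := by rw [inner_add_right, add_smul]
  map_smul' c x := by rw [inner_smul_right, smul_smul]; rfl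

@[simp] lemma pr_apply (u x : E2) : pr u x = (inner ℂ u x : ℂ) • u := rfl

lemma pr_symm (u : E2) : (pr u).IsSymmetric := by
  intro x y
  simp only [pr_apply, inner_smul_left, inner_smul_right]
  rw [← inner_conj_symm x u]; ring

lemma pr_idem (u : E2) (hu : (inner ℂ u u : ℂ) = 1) : pr u ∘ₗ pr u = pr u := by
  ext x
  have hu' : ((‖u‖ : ℝ) : ℂ)^2 = 1 := by simpa using hu
  simp [inner_smul_right, hu, hu', smul_smul, mul_comm]

lemma pr_range (u : E2) (hu : (inner ℂ u u : ℂ) = 1) : LinearMap.range (pr u) = ℂ ∙ u := by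
  apply le_antisymm
  · rintro _ ⟨x, rfl⟩
    exact Submodule.smul_mem _ _ (Submodule.mem_span_singleton_self u)
  · rw [Submodule.span_singleton_le_iff_mem]
    have hu' : ((‖u‖ : ℝ) : ℂ)^2 = 1 := by simpa using hu
    exact ⟨u, by simp [hu, hu']⟩

lemma pr_finrank (u : E2) (hu : (inner ℂ u u : ℂ) = 1) :
    Module.finrank ℂ (LinearMap.range (pr u)) = 1 := by
  rw [pr_range u hu]
  apply finrank_span_singleton
  intro h; rw [h] at hu; simp at hu

def v2 (a b : ℝ) : E2 := (WithLp.equiv 2 (Fin 2 → ℂ)).symm ![(a:ℂ), (b:ℂ)]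

@[simp] lemma v2_zero (a b : ℝ) : v2 a b 0 = (a:ℂ) := rfl
@[simp] lemma v2_one (a b : ℝ) : v2 a b 1 = (b:ℂ) := rfl

lemma inner_v2 (a b : ℝ) (x : E2) : (inner ℂ (v2 a b) x : ℂ) = (a:ℂ) * x 0 + (b:ℂ) * x 1 := by
  simp [PiLp.inner_apply, Fin.sum_univ_two]; ring

lemma inner_v2_self (a b : ℝ) (h : a^2 + b^2 = 1) : (inner ℂ (v2 a b) (v2 a b) : ℂ) = 1 := by
  rw [inner_v2, v2_zero, v2_one]; ring_nf; exact_mod_cast h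
lemma inner_self_proj (Q : E2 →ₗ[ℂ] E2) (hQ : IsOrthProj Q) (v : E2) :
    (inner ℂ v (Q v) : ℂ) = ((‖Q v‖ : ℝ) : ℂ)^2 := by
  conv_lhs => rw [← hQ.2]
  rw [LinearMap.comp_apply, ← hQ.1 v (Q v), inner_self_eq_norm_sq_to_K]
  norm_cast

lemma key (α β δ γ : ℝ) (hβ : 0 < β) (hδ : 0 < δ)
    (P Q R : E2 →ₗ[ℂ] E2)
    (hP : IsOrthProj P) (hQ : IsOrthProj Q) (hR : IsOrthProj R)
    (hrk : Module.finrank ℂ (LinearMap.range P) = 1)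
    (hirr : IrreducibleFamily {P, Q, R})
    (hsum : (α : ℂ) • P + (β : ℂ) • Q + (δ : ℂ) • R
        = (γ : ℂ) • (LinearMap.id : E2 →ₗ[ℂ] E2)) : α < γ := by
  by_contra hle
  push_neg at hle
  -- get a nonzero vector in the range of P
  have hne : LinearMap.range P ≠ ⊥ := by
    intro h; rw [h] at hrk; simp at hrk
  obtain ⟨v, hv, hv0⟩ := Submodule.ne_bot_iff _ |>.1 hne
  obtain ⟨w, rfl⟩ := hv
  set v := P w with hvdef
  have hPv : P v = v := by
    conv_lhs => rw [hvdef, ← LinearMap.comp_apply, hP.2]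
  -- apply the sum identity at v
  have happ := congrArg (fun f : E2 →ₗ[ℂ] E2 => f v) hsum
  simp only [LinearMap.add_apply, LinearMap.smul_apply, LinearMap.id_apply] at happ
  rw [hPv] at happ
  -- take inner product with v
  have hin : (β:ℂ) * (inner ℂ v (Q v) : ℂ) + (δ:ℂ) * (inner ℂ v (R v) : ℂ)
      = ((γ:ℂ) - α) * (inner ℂ v v : ℂ) := by
    have := congrArg (fun y : E2 => (inner ℂ v y : ℂ)) happ
    simp only [inner_add_right, inner_smul_right] at this
    linear_combination this
  have hself : (inner ℂ v v : ℂ) = ((‖v‖ : ℝ) : ℂ)^2 := by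
    rw [inner_self_eq_norm_sq_to_K]; norm_cast
  rw [inner_self_proj Q hQ v, inner_self_proj R hR v, hself] at hin
  have hreal : β * ‖Q v‖^2 + δ * ‖R v‖^2 = (γ - α) * ‖v‖^2 := by
    exact_mod_cast hin
  have hvnorm : 0 < ‖v‖ := norm_pos_iff.2 hv0
  have hQsq : ‖Q v‖^2 = 0 := by
    nlinarith [sq_nonneg ‖Q v‖, sq_nonneg ‖R v‖, mul_pos hvnorm hvnorm,
      mul_nonneg (sub_nonneg.2 hle) (sq_nonneg ‖v‖),
      mul_nonneg hβ.le (sq_nonneg ‖Q v‖), mul_nonneg hδ.le (sq_nonneg ‖R v‖)]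
  have hRsq : ‖R v‖^2 = 0 := by
    nlinarith [sq_nonneg ‖Q v‖, sq_nonneg ‖R v‖, mul_pos hvnorm hvnorm,
      mul_nonneg (sub_nonneg.2 hle) (sq_nonneg ‖v‖),
      mul_nonneg hβ.le (sq_nonneg ‖Q v‖), mul_nonneg hδ.le (sq_nonneg ‖R v‖)]
  have hQv0 : Q v = 0 := by
    rw [← norm_eq_zero]; exact pow_eq_zero_iff two_ne_zero |>.1 hQsq
  have hRv0 : R v = 0 := by
    rw [← norm_eq_zero]; exact pow_eq_zero_iff two_ne_zero |>.1 hRsq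
  -- span of v is invariant
  have hinv : ∀ f ∈ ({P, Q, R} : Set (E2 →ₗ[ℂ] E2)),
      (Submodule.span ℂ {v}).map f ≤ Submodule.span ℂ {v} := by
    intro f hf
    rw [Submodule.map_span, Set.image_singleton, Submodule.span_le,
      Set.singleton_subset_iff]
    rcases hf with rfl | rfl | rfl
    · rw [hPv]; exact Submodule.mem_span_singleton_self v
    · rw [hQv0]; exact Submodule.zero_mem _
    · rw [hRv0]; exact Submodule.zero_mem _
  rcases hirr _ hinv with h | h
  · exact hv0 (by simpa [Submodule.span_singleton_eq_bot] using h)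
  · have h1 : Module.finrank ℂ (Submodule.span ℂ ({v} : Set E2)) = 1 :=
      finrank_span_singleton hv0
    rw [h, finrank_top] at h1
    rw [finrank_euclideanSpace_fin] at h1
    omega

lemma vec_decomp (x : E2) : x = x 0 • v2 1 0 + x 1 • v2 0 1 := by
  ext i
  fin_cases i <;>
    simp [PiLp.add_apply, PiLp.smul_apply, v2_zero, v2_one, smul_eq_mul]

lemma proj_trace (P : E2 →ₗ[ℂ] E2) (hP : IsOrthProj P)
    (hrk : Module.finrank ℂ (LinearMap.range P) = 1) :
    LinearMap.trace ℂ E2 P = 1 := by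
  have hproj : LinearMap.IsProj (LinearMap.range P) P := by
    constructor
    · intro x; exact LinearMap.mem_range_self P x
    · rintro x ⟨y, rfl⟩
      conv_lhs => rw [← LinearMap.comp_apply, hP.2]
  rw [hproj.trace, hrk]
  norm_num

lemma construct (α β γ : ℝ) (hα : 0 < α) (hβ : 0 < β) (hγ : 0 < γ)
    (hαγ : α < γ) (hβγ : β < γ) (hδ : 0 < 2*γ - α - β) (hδγ : 2*γ - α - β < γ) :
    ∃ P Q R : E2 →ₗ[ℂ] E2,
        IsOrthProj P ∧ IsOrthProj Q ∧ IsOrthProj R ∧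
        Module.finrank ℂ (LinearMap.range P) = 1 ∧
        Module.finrank ℂ (LinearMap.range Q) = 1 ∧
        Module.finrank ℂ (LinearMap.range R) = 1 ∧
        IrreducibleFamily {P, Q, R} ∧
        (α : ℂ) • P + (β : ℂ) • Q + ((2*γ - α - β : ℝ) : ℂ) • R
          = (γ : ℂ) • (LinearMap.id : E2 →ₗ[ℂ] E2) := by
  obtain ⟨δ, hδdef⟩ : ∃ x : ℝ, x = 2*γ - α - β := ⟨_, rfl⟩
  rw [← hδdef] at hδ hδγ ⊢
  obtain ⟨s, hsdef⟩ : ∃ x : ℝ, x = γ*(α+β-γ)/(α*β) := ⟨_, rfl⟩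
  obtain ⟨t, htdef⟩ : ∃ x : ℝ, x = γ*(γ-β)/(α*δ) := ⟨_, rfl⟩
  have hαβγ : 0 < α + β - γ := by rw [hδdef] at hδγ; linarith
  have hs0 : 0 < s := by rw [hsdef]; positivity
  have hs1 : s < 1 := by
    rw [hsdef, div_lt_one (by positivity)]
    nlinarith [mul_pos (sub_pos.2 hαγ) (sub_pos.2 hβγ)]
  have ht0 : 0 < t := by
    have h1 : 0 < γ - β := by linarith
    rw [htdef]; positivity
  have ht1 : t < 1 := by
    rw [htdef, div_lt_one (by positivity)]
    rw [hδdef]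
    nlinarith [mul_pos (sub_pos.2 hαγ) hαβγ]
  obtain ⟨q0, hq0def⟩ : ∃ x : ℝ, x = Real.sqrt (1 - s) := ⟨_, rfl⟩
  obtain ⟨q1, hq1def⟩ : ∃ x : ℝ, x = Real.sqrt s := ⟨_, rfl⟩
  obtain ⟨r0, hr0def⟩ : ∃ x : ℝ, x = Real.sqrt (1 - t) := ⟨_, rfl⟩
  obtain ⟨r1, hr1def⟩ : ∃ x : ℝ, x = -Real.sqrt t := ⟨_, rfl⟩
  have hq0sq : q0 * q0 = 1 - s := by rw [hq0def]; exact Real.mul_self_sqrt (by linarith)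
  have hq1sq : q1 * q1 = s := by rw [hq1def]; exact Real.mul_self_sqrt hs0.le
  have hr0sq : r0 * r0 = 1 - t := by rw [hr0def]; exact Real.mul_self_sqrt (by linarith)
  have hr1sq : r1 * r1 = t := by
    rw [hr1def, neg_mul_neg]; exact Real.mul_self_sqrt ht0.le
  have hq0pos : 0 < q0 := by rw [hq0def]; exact Real.sqrt_pos.2 (by linarith)
  have hq1pos : 0 < q1 := by rw [hq1def]; exact Real.sqrt_pos.2 hs0
  have hr0pos : 0 < r0 := by rw [hr0def]; exact Real.sqrt_pos.2 (by linarith)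
  have hr1neg : r1 < 0 := by rw [hr1def]; exact neg_neg_iff_pos.2 (Real.sqrt_pos.2 ht0)
  -- key real identities
  have h2γ : (0:ℝ) < 2*γ - α - β := by rw [← hδdef]; exact hδ
  have hB : β * s + δ * t = γ := by
    rw [hsdef, htdef]
    field_simp [hα.ne', hβ.ne', hδ.ne']
    ring
  have hA : α + β * (1 - s) + δ * (1 - t) = γ := by
    rw [hδdef] at hB ⊢; nlinarith [hB]
  have hid : (β * (q0 * q1))^2 = (δ * (r0 * r1))^2 := by
    have e1 : (β * (q0 * q1))^2 = β^2 * ((1-s) * s) := by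
      calc (β * (q0 * q1))^2 = β^2 * ((q0*q0) * (q1*q1)) := by ring
        _ = β^2 * ((1-s) * s) := by rw [hq0sq, hq1sq]
    have e2 : (δ * (r0 * r1))^2 = δ^2 * ((1-t) * t) := by
      calc (δ * (r0 * r1))^2 = δ^2 * ((r0*r0) * (r1*r1)) := by ring
        _ = δ^2 * ((1-t) * t) := by rw [hr0sq, hr1sq]
    rw [e1, e2, hsdef, htdef]
    field_simp [hα.ne', hβ.ne', hδ.ne']
    rw [hδdef]
    ring
  have hC : β * (q0 * q1) + δ * (r0 * r1) = 0 := by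
    have h1 : 0 ≤ β * (q0 * q1) := by positivity
    have h2 : δ * (r0 * r1) ≤ 0 := by
      apply mul_nonpos_of_nonneg_of_nonpos hδ.le
      exact mul_nonpos_of_nonneg_of_nonpos hr0pos.le hr1neg.le
    have habs : |β * (q0 * q1)| = |δ * (r0 * r1)| := by
      rw [← Real.sqrt_sq_eq_abs, ← Real.sqrt_sq_eq_abs, hid]
    rw [abs_of_nonneg h1, abs_of_nonpos h2] at habs
    linarith
  -- the three unit vectors
  have hPu : (inner ℂ (v2 1 0) (v2 1 0) : ℂ) = 1 := inner_v2_self 1 0 (by norm_num)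
  have hQu : (inner ℂ (v2 q0 q1) (v2 q0 q1) : ℂ) = 1 :=
    inner_v2_self q0 q1 (by rw [sq, sq, hq0sq, hq1sq]; ring)
  have hRu : (inner ℂ (v2 r0 r1) (v2 r0 r1) : ℂ) = 1 :=
    inner_v2_self r0 r1 (by rw [sq, sq, hr0sq, hr1sq]; ring)
  refine ⟨pr (v2 1 0), pr (v2 q0 q1), pr (v2 r0 r1),
    ⟨pr_symm _, pr_idem _ hPu⟩, ⟨pr_symm _, pr_idem _ hQu⟩, ⟨pr_symm _, pr_idem _ hRu⟩,
    pr_finrank _ hPu, pr_finrank _ hQu, pr_finrank _ hRu, ?_, ?_⟩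
  · -- irreducibility
    intro W hW
    by_cases hbot : W = ⊥
    · exact Or.inl hbot
    right
    obtain ⟨v, hvW, hv0⟩ := (Submodule.ne_bot_iff W).1 hbot
    have hq0ne : (q0:ℂ) ≠ 0 := by exact_mod_cast hq0pos.ne'
    have hq1ne : (q1:ℂ) ≠ 0 := by exact_mod_cast hq1pos.ne'
    have hQW : ∀ w ∈ W, pr (v2 q0 q1) w ∈ W := fun w hw =>
      hW _ (by simp) (Submodule.mem_map_of_mem hw)
    have huQ : v2 q0 q1 = (q0:ℂ) • v2 1 0 + (q1:ℂ) • v2 0 1 := by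
      conv_lhs => rw [vec_decomp (v2 q0 q1)]
      rw [v2_zero, v2_one]
    have cancel : ∀ (c : ℂ) (u : E2), c ≠ 0 → c • u ∈ W → u ∈ W := by
      intro c u hc h
      have := W.smul_mem c⁻¹ h
      rwa [smul_smul, inv_mul_cancel₀ hc, one_smul] at this
    have hPW : ∀ w ∈ W, pr (v2 1 0) w ∈ W := fun w hw =>
      hW _ (by simp) (Submodule.mem_map_of_mem hw)
    -- from uQ ∈ W (up to scalar) we get both basis vectors
    have step : ∀ (c : ℂ), c ≠ 0 → c • v2 q0 q1 ∈ W →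
        v2 1 0 ∈ W ∧ v2 0 1 ∈ W := by
      intro c hc hcW
      have huQW : v2 q0 q1 ∈ W := cancel c _ hc hcW
      have h1 : pr (v2 1 0) (v2 q0 q1) = (q0:ℂ) • v2 1 0 := by
        rw [pr_apply, inner_v2, v2_zero, v2_one]
        norm_num
      have he1 : v2 1 0 ∈ W := by
        apply cancel (q0:ℂ) _ hq0ne
        rw [← h1]; exact hPW _ huQW
      have he2 : v2 0 1 ∈ W := by
        apply cancel (q1:ℂ) _ hq1ne
        have := W.sub_mem huQW (W.smul_mem (q0:ℂ) he1)
        rwa [huQ, add_sub_cancel_left] at this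
      exact ⟨he1, he2⟩
    have hboth : v2 1 0 ∈ W ∧ v2 0 1 ∈ W := by
      by_cases h0 : v 0 = 0
      · have hv1 : v 1 ≠ 0 := by
          intro h1
          apply hv0
          rw [vec_decomp v, h0, h1, zero_smul, zero_smul, add_zero]
        have he2 : v2 0 1 ∈ W := by
          apply cancel (v 1) _ hv1
          have : v = v 1 • v2 0 1 := by
            conv_lhs => rw [vec_decomp v]
            rw [h0, zero_smul, zero_add]
          rwa [← this]
        apply step (q1:ℂ) hq1ne
        have h2 : pr (v2 q0 q1) (v2 0 1) = (q1:ℂ) • v2 q0 q1 := by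
          rw [pr_apply, inner_v2, v2_zero, v2_one]
          norm_num
        rw [← h2]; exact hQW _ he2
      · have hPv : pr (v2 1 0) v = v 0 • v2 1 0 := by
          rw [pr_apply, inner_v2]
          norm_num
        have he1 : v2 1 0 ∈ W := by
          apply cancel (v 0) _ h0
          rw [← hPv]; exact hPW _ hvW
        apply step (q0:ℂ) hq0ne
        have h2 : pr (v2 q0 q1) (v2 1 0) = (q0:ℂ) • v2 q0 q1 := by
          rw [pr_apply, inner_v2, v2_zero, v2_one]
          norm_num
        rw [← h2]; exact hQW _ he1
    rw [Submodule.eq_top_iff']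
    intro x
    rw [vec_decomp x]
    exact W.add_mem (W.smul_mem _ hboth.1) (W.smul_mem _ hboth.2)
  · -- the sum identity
    have hAc : (α:ℂ) + (β:ℂ) * ((q0:ℂ) * (q0:ℂ)) + (δ:ℂ) * ((r0:ℂ) * (r0:ℂ)) = (γ:ℂ) := by
      have : α + β * (q0 * q0) + δ * (r0 * r0) = γ := by rw [hq0sq, hr0sq]; exact hA
      exact_mod_cast this
    have hBc : (β:ℂ) * ((q1:ℂ) * (q1:ℂ)) + (δ:ℂ) * ((r1:ℂ) * (r1:ℂ)) = (γ:ℂ) := by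
      have : β * (q1 * q1) + δ * (r1 * r1) = γ := by rw [hq1sq, hr1sq]; exact hB
      exact_mod_cast this
    have hCc : (β:ℂ) * ((q0:ℂ) * (q1:ℂ)) + (δ:ℂ) * ((r0:ℂ) * (r1:ℂ)) = 0 := by
      exact_mod_cast hC
    ext x i
    simp only [LinearMap.add_apply, LinearMap.smul_apply, LinearMap.id_apply, pr_apply,
      inner_v2, v2_zero, v2_one, PiLp.add_apply, PiLp.smul_apply, smul_eq_mul]
    fin_cases i <;>
      simp only [v2, WithLp.equiv_symm_apply, PiLp.toLp_apply, Matrix.cons_val_zero, Matrix.cons_val_one,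
        Matrix.head_cons, Matrix.cons_val', Matrix.empty_val', Matrix.cons_val_fin_one,
        Fin.zero_eta, Fin.mk_one, Fin.isValue]
    · push_cast
      linear_combination x 0 * hAc + x 1 * hCc
    · push_cast
      linear_combination x 0 * hCc + x 1 * hBc

/-- The weights with which the unique indecomposable representation of the poset `(1,1,1)`
with dimension vector `(1;1;1;2)` can be unitarized: irreducible triples of rank-one
orthogonal projections on `ℂ²` with `αP + βQ + δR = γI` exist iff `α < γ`, `β < γ`,
`δ < γ`, `α + β + δ = 2γ`. -/
theorem unitarization_111_dim2 (α β δ γ : ℝ)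
    (hα : 0 < α) (hβ : 0 < β) (hδ : 0 < δ) (hγ : 0 < γ) :
    (∃ P Q R : EuclideanSpace ℂ (Fin 2) →ₗ[ℂ] EuclideanSpace ℂ (Fin 2),
        IsOrthProj P ∧ IsOrthProj Q ∧ IsOrthProj R ∧
        Module.finrank ℂ (LinearMap.range P) = 1 ∧
        Module.finrank ℂ (LinearMap.range Q) = 1 ∧
        Module.finrank ℂ (LinearMap.range R) = 1 ∧
        IrreducibleFamily {P, Q, R} ∧
        (α : ℂ) • P + (β : ℂ) • Q + (δ : ℂ) • R
          = (γ : ℂ) • (LinearMap.id : EuclideanSpace ℂ (Fin 2) →ₗ[ℂ] _)) ↔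
      (α < γ ∧ β < γ ∧ δ < γ ∧ α + β + δ = 2 * γ) := by
  constructor
  · rintro ⟨P, Q, R, hP, hQ, hR, rkP, rkQ, rkR, hirr, hsum⟩
    have hset1 : ({Q, P, R} : Set (E2 →ₗ[ℂ] E2)) = {P, Q, R} := by
      ext f; simp only [Set.mem_insert_iff, Set.mem_singleton_iff]; tauto
    have hset2 : ({R, Q, P} : Set (E2 →ₗ[ℂ] E2)) = {P, Q, R} := by
      ext f; simp only [Set.mem_insert_iff, Set.mem_singleton_iff]; tauto
    have hαγ : α < γ := key α β δ γ hβ hδ P Q R hP hQ hR rkP hirr hsum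
    have hβγ : β < γ := by
      apply key β α δ γ hα hδ Q P R hQ hP hR rkQ (by rw [hset1]; exact hirr)
      rw [← hsum]; module
    have hδγ : δ < γ := by
      apply key δ β α γ hβ hα R Q P hR hQ hP rkR (by rw [hset2]; exact hirr)
      rw [← hsum]; module
    refine ⟨hαγ, hβγ, hδγ, ?_⟩
    have htr := congrArg (LinearMap.trace ℂ E2) hsum
    simp only [map_add, map_smul, LinearMap.trace_id, smul_eq_mul] at htr
    rw [proj_trace P hP rkP, proj_trace Q hQ rkQ, proj_trace R hR rkR,
      finrank_euclideanSpace_fin] at htr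
    have : α * 1 + β * 1 + δ * 1 = γ * 2 := by exact_mod_cast htr
    linarith
  · rintro ⟨h1, h2, h3, h4⟩
    have h := construct α β γ hα hβ hγ h1 h2 (by linarith) (by linarith)
    have hδe : (2*γ - α - β : ℝ) = δ := by linarith
    rwa [hδe] at h
end
end
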